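/- Suppose n ≥ 3 and let ℓ ≥ 1 be an integer. Let M′ = (x_{ij} : 1 ≤ i ≤ m, 1 ≤ j ≤ n−1) be the ideal of R generated by the entries of the first n−1 columns and 𝔮 = (x_{1n}, …, x_{mn}) the ideal generated by the entries of the last column. Then μ_R(M·Q^ℓ) = μ_R(M′·Q^ℓ) + μ_R(𝔮·Q^ℓ). -/

import Mathlib

set_option synthInstance.maxHeartbeats 1000000

noncomputable section

open MvPolynomial

/-- The minimal number of generators of an ideal `I`, i.e. the least cardinality of a
finite generating set of `I`. -/
def idealMu {A : Type*} [CommRing A] (I : Ideal A) : ℕ :=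
  sInf {c : ℕ | ∃ s : Finset A, s.card = c ∧ Ideal.span (s : Set A) = I}

variable (k : Type*) [Field k] (m n : ℕ)

/-- The ideal `I₂(X)` of `2 × 2` minors of the generic `m × n` matrix
`X = (X_{ij})` in the polynomial ring `S = k[X_{ij}]`. -/
def detIdeal : Ideal (MvPolynomial (Fin m × Fin n) k) :=
  Ideal.span {f | ∃ (i₁ i₂ : Fin m) (j₁ j₂ : Fin n), i₁ < i₂ ∧ j₁ < j₂ ∧
    f = X (i₁, j₁) * X (i₂, j₂) - X (i₁, j₂) * X (i₂, j₁)}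

/-- The determinantal ring `R = S/I₂(X)`. -/
abbrev DetRing := MvPolynomial (Fin m × Fin n) k ⧸ detIdeal k m n

/-- `x_{ij}`, the image of `X_{ij}` in `R`. -/
def xbar (i : Fin m) (j : Fin n) : DetRing k m n :=
  Ideal.Quotient.mk _ (X (i, j))

/-- The graded maximal ideal `M = R₊`, generated by all the `x_{ij}`. -/
def maxIdeal : Ideal (DetRing k m n) :=
  Ideal.span (Set.range fun p : Fin m × Fin n => xbar k m n p.1 p.2)

/-- The ideal `Q = (x_{11}, x_{21}, …, x_{m1})` generated by the entries of the
first column of `X`. -/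
def colIdeal : Ideal (DetRing k m n) :=
  Ideal.span {y | ∃ (i : Fin m) (j : Fin n), (j : ℕ) = 0 ∧ y = xbar k m n i j}

/-- The ideal `M′ = (x_{ij} : 1 ≤ i ≤ m, 1 ≤ j ≤ n−1)` generated by the entries of
the first `n−1` columns of `X`. -/
def maxIdeal' : Ideal (DetRing k m n) :=
  Ideal.span {y | ∃ (i : Fin m) (j : Fin n), (j : ℕ) < n - 1 ∧ y = xbar k m n i j}

/-- The ideal `𝔮 = (x_{1n}, …, x_{mn})` generated by the entries of the last
column of `X`. -/
def lastColIdeal : Ideal (DetRing k m n) :=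
  Ideal.span {y | ∃ (i : Fin m) (j : Fin n), (j : ℕ) = n - 1 ∧ y = xbar k m n i j}

set_option maxHeartbeats 2000000

namespace Stmt4Aux

/-- The "Segre" target polynomial ring `k[Y₁,…,Y_m,Z₁,…,Z_n]`. -/
abbrev T := MvPolynomial (Fin m ⊕ Fin n) k

/-- The Segre map `R → T`, `x_{ij} ↦ Y_i Z_j`. -/
def φ : DetRing k m n →ₐ[k] T k m n :=
  Ideal.Quotient.liftₐ _ (aeval fun p : Fin m × Fin n => X (Sum.inl p.1) * X (Sum.inr p.2))
    (by
      intro a ha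
      have : detIdeal k m n ≤ RingHom.ker (aeval fun p : Fin m × Fin n =>
          (X (Sum.inl p.1) * X (Sum.inr p.2) : T k m n)).toRingHom := by
        rw [detIdeal, Ideal.span_le]
        rintro f ⟨i₁, i₂, j₁, j₂, _, _, rfl⟩
        simp only [SetLike.mem_coe, RingHom.mem_ker, AlgHom.toRingHom_eq_coe,
          RingHom.coe_coe, map_sub, map_mul, aeval_X]
        ring
      exact this ha
)

lemma φ_xbar (i : Fin m) (j : Fin n) :
    φ k m n (xbar k m n i j) = X (Sum.inl i) * X (Sum.inr j) := by
  simp [φ, xbar, Ideal.Quotient.liftₐ_apply]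
  exact (Ideal.Quotient.lift_mk _ _ _).trans (by simp)

/-- The basic 2×2-minor relation in `R`. -/
lemma rel (i₁ i₂ : Fin m) (j₁ j₂ : Fin n) (h : i₁ < i₂) (h' : j₁ < j₂) :
    xbar k m n i₁ j₁ * xbar k m n i₂ j₂ = xbar k m n i₁ j₂ * xbar k m n i₂ j₁ := by
  rw [xbar, xbar, xbar, xbar, ← map_mul, ← map_mul, Ideal.Quotient.eq]
  exact Ideal.subset_span ⟨i₁, i₂, j₁, j₂, h, h', rfl⟩

/-- Column entries can be exchanged between two rows. -/
lemma swap (a b : Fin m) (c q : Fin n) :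
    xbar k m n a q * xbar k m n b c = xbar k m n a c * xbar k m n b q := by
  rcases lt_trichotomy a b with hab | rfl | hab
  · rcases lt_trichotomy c q with hcq | rfl | hcq
    · linear_combination - rel k m n a b c q hab hcq
    · ring
    · linear_combination rel k m n a b q c hab hcq
  · ring
  · rcases lt_trichotomy c q with hcq | rfl | hcq
    · linear_combination rel k m n b a c q hab hcq
    · ring
    · linear_combination - rel k m n b a q c hab hcq

variable {m n}

/-- Product of the column-`c` entries indexed by the multiset `s`. -/
def Qprod (c : Fin n) (s : Multiset (Fin m)) : DetRing k m n :=
  (s.map fun i => xbar k m n i c).prod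

@[simp] lemma Qprod_zero (c : Fin n) : Qprod k c (0 : Multiset (Fin m)) = 1 := by
  simp [Qprod]

@[simp] lemma Qprod_cons (c : Fin n) (a : Fin m) (s : Multiset (Fin m)) :
    Qprod k c (a ::ₘ s) = xbar k m n a c * Qprod k c s := by
  simp [Qprod]

/-- `x_{a,q} · Qprod c s` only depends on the multiset `a ::ₘ s` (and `q`, `c`). -/
lemma mul_Qprod_welldef (q c : Fin n) {a a' : Fin m} {s s' : Multiset (Fin m)}
    (h : a ::ₘ s = a' ::ₘ s') :
    xbar k m n a q * Qprod k c s = xbar k m n a' q * Qprod k c s' := by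
  rcases Multiset.cons_eq_cons.mp h with ⟨rfl, rfl⟩ | ⟨-, t, rfl, rfl⟩
  · rfl
  · rw [Qprod_cons, Qprod_cons, ← mul_assoc, ← mul_assoc, swap]
    ring

/-- Generator of `(column q stuff)·Q^ℓ` attached to a list. -/
def genL (q c : Fin n) : List (Fin m) → DetRing k m n
  | [] => 0
  | a :: t => xbar k m n a q * Qprod k c ↑t

/-- Canonical generator attached to a multiset. -/
def gen (q c : Fin n) (u : Multiset (Fin m)) : DetRing k m n :=
  genL k q c u.toList

lemma gen_eq (q c : Fin n) (u : Multiset (Fin m)) (a : Fin m) (s : Multiset (Fin m))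
    (h : u = a ::ₘ s) : gen k q c u = xbar k m n a q * Qprod k c s := by
  have h0 : u.toList ≠ [] := by
    intro he
    have := Multiset.coe_toList u
    rw [he] at this
    simp [h] at this
  obtain ⟨b, t, ht⟩ := List.exists_cons_of_ne_nil h0
  have hbt : (b ::ₘ (t : Multiset (Fin m))) = a ::ₘ s := by
    rw [show (b ::ₘ (t : Multiset (Fin m))) = ((b :: t : List (Fin m)) : Multiset (Fin m)) from rfl,
      ← ht, Multiset.coe_toList, h]
  rw [gen, ht]
  exact mul_Qprod_welldef k q c hbt

end Stmt4Aux

namespace Stmt4Aux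

variable (k : Type*) [Field k] {m n : ℕ}

/-- The generating set of `(span {x_{ij} : P j}) · Q^ℓ` by canonical generators. -/
def genSet (c : Fin n) (ℓ : ℕ) (P : Fin n → Prop) : Set (DetRing k m n) :=
  {y | ∃ (j : Fin n) (u : Multiset (Fin m)), P j ∧ u.card = ℓ + 1 ∧ y = gen k j c u}

lemma colIdeal_eq (c : Fin n) (hc : (c : ℕ) = 0) :
    colIdeal k m n = Ideal.span {y | ∃ i : Fin m, y = xbar k m n i c} := by
  rw [colIdeal]
  congr 1
  ext y
  constructor
  · rintro ⟨i, j, hj, rfl⟩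
    exact ⟨i, by rw [show j = c from Fin.ext (by omega)]⟩
  · rintro ⟨i, rfl⟩
    exact ⟨i, c, hc, rfl⟩

lemma colIdeal_pow (c : Fin n) (hc : (c : ℕ) = 0) (ℓ : ℕ) :
    colIdeal k m n ^ ℓ =
      Ideal.span {y | ∃ s : Multiset (Fin m), s.card = ℓ ∧ y = Qprod k c s} := by
  induction ℓ with
  | zero =>
    rw [Submodule.pow_zero, Ideal.one_eq_top, eq_comm, Ideal.eq_top_iff_one]
    exact Ideal.subset_span ⟨0, by simp⟩
  | succ ℓ ih =>
    rw [Submodule.pow_succ, ih, colIdeal_eq k c hc, Ideal.span_mul_span]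
    apply le_antisymm
    · rw [Ideal.span_le]
      intro y hy
      simp only [Set.mem_mul] at hy
      obtain ⟨z, ⟨s, hs, rfl⟩, x, ⟨i, rfl⟩, hy⟩ := hy
      rcases hy with rfl
      apply Ideal.subset_span
      exact ⟨i ::ₘ s, by simp [hs], by rw [Qprod_cons]; ring⟩
    · rw [Ideal.span_le]
      rintro y ⟨u, hu, rfl⟩
      have h0 : u ≠ 0 := by intro h; rw [h] at hu; simp at hu
      obtain ⟨a, ha⟩ := Multiset.exists_mem_of_ne_zero h0
      obtain ⟨s, rfl⟩ := Multiset.exists_cons_of_mem ha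
      apply Ideal.subset_span
      simp only [Set.mem_mul]
      refine ⟨Qprod k c s, ⟨s, by simpa using hu, rfl⟩, xbar k m n a c, ⟨a, rfl⟩, ?_⟩
      rw [Qprod_cons]
      simp [mul_comm]

lemma prod_span (c : Fin n) (hc : (c : ℕ) = 0) (ℓ : ℕ) (P : Fin n → Prop) :
    Ideal.span {y | ∃ (i : Fin m) (j : Fin n), P j ∧ y = xbar k m n i j} *
        colIdeal k m n ^ ℓ = Ideal.span (genSet k c ℓ P) := by
  rw [colIdeal_pow k c hc, Ideal.span_mul_span]
  apply le_antisymm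
  · rw [Ideal.span_le]
    intro y hy
    simp only [Set.mem_mul] at hy
    obtain ⟨z, ⟨i, j, hP, rfl⟩, x, ⟨s, hs, rfl⟩, hy⟩ := hy
    rcases hy with rfl
    apply Ideal.subset_span
    exact ⟨j, i ::ₘ s, hP, by simp [hs], (gen_eq k j c (i ::ₘ s) i s rfl).symm⟩
  · rw [Ideal.span_le]
    rintro y ⟨j, u, hP, hu, rfl⟩
    have h0 : u ≠ 0 := by intro h; rw [h] at hu; simp at hu
    obtain ⟨a, ha⟩ := Multiset.exists_mem_of_ne_zero h0
    obtain ⟨s, rfl⟩ := Multiset.exists_cons_of_mem ha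
    rw [gen_eq k j c (a ::ₘ s) a s rfl]
    apply Ideal.subset_span
    simp only [Set.mem_mul]
    exact ⟨xbar k m n a j, ⟨a, j, hP, rfl⟩, Qprod k c s, ⟨s, by simpa using hu, rfl⟩, rfl⟩

lemma maxIdeal_eq :
    maxIdeal k m n =
      Ideal.span {y | ∃ (i : Fin m) (j : Fin n), True ∧ y = xbar k m n i j} := by
  rw [maxIdeal]
  congr 1
  ext y
  constructor
  · rintro ⟨⟨i, j⟩, rfl⟩
    exact ⟨i, j, trivial, rfl⟩
  · rintro ⟨i, j, -, rfl⟩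
    exact ⟨(i, j), rfl⟩

end Stmt4Aux

namespace Stmt4Aux

variable (k : Type*) [Field k] {m n : ℕ}

/-- Total degree of an exponent vector. -/
def wt (β : Fin m ⊕ Fin n →₀ ℕ) : ℕ := β.sum fun _ e => e

@[simp] lemma wt_zero : wt (0 : Fin m ⊕ Fin n →₀ ℕ) = 0 := by simp [wt]

lemma wt_add (α β : Fin m ⊕ Fin n →₀ ℕ) : wt (α + β) = wt α + wt β := by
  simp [wt, Finsupp.sum_add_index]

@[simp] lemma wt_single (a : Fin m ⊕ Fin n) (e : ℕ) : wt (Finsupp.single a e) = e := by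
  simp [wt, Finsupp.sum_single_index]

lemma wt_eq_zero {α : Fin m ⊕ Fin n →₀ ℕ} (h : wt α = 0) : α = 0 := by
  ext a
  by_cases ha : a ∈ α.support
  · exfalso
    have h1 : α a ≤ wt α := Finset.single_le_sum (f := fun x => α x) (by intros; positivity) ha
    have h2 : α a ≠ 0 := Finsupp.mem_support_iff.mp ha
    omega
  · simpa using Finsupp.notMem_support_iff.mp ha

/-- The ideal of polynomials all of whose monomials have degree `≥ d`. -/
def lowVanish (d : ℕ) : Ideal (T k m n) where
  carrier := {v | ∀ β, wt β < d → coeff β v = 0}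
  zero_mem' := by intro β _; simp
  add_mem' := by
    intro a b ha hb β hβ
    simp [coeff_add, ha β hβ, hb β hβ]
  smul_mem' := by
    intro u v hv β hβ
    rw [smul_eq_mul]
    classical
    rw [coeff_mul]
    apply Finset.sum_eq_zero
    rintro ⟨α, γ⟩ hmem
    have hadd : α + γ = β := Finset.HasAntidiagonal.mem_antidiagonal.mp hmem
    have : wt γ < d := by
      have := wt_add α γ
      rw [hadd] at this
      omega
    rw [hv γ this, mul_zero]

lemma coeff_mul_lowVanish {d : ℕ} (u v : T k m n) (hv : v ∈ lowVanish k d)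
    {β : Fin m ⊕ Fin n →₀ ℕ} (hβ : wt β = d) :
    coeff β (u * v) = constantCoeff u * coeff β v := by
  classical
  rw [coeff_mul]
  rw [Finset.sum_eq_single ((0 : Fin m ⊕ Fin n →₀ ℕ), β)]
  · simp [constantCoeff_eq]
  · rintro ⟨α, γ⟩ hmem hne
    have hadd : α + γ = β := Finset.HasAntidiagonal.mem_antidiagonal.mp hmem
    have hα : α ≠ 0 := by
      rintro rfl
      rw [zero_add] at hadd
      exact hne (by rw [hadd])
    have hwα : wt α ≠ 0 := fun h0 => hα (wt_eq_zero h0)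
    have : wt γ < d := by
      have := wt_add α γ
      rw [hadd] at this
      omega
    rw [hv γ this, mul_zero]
  · intro h
    exact absurd (Finset.HasAntidiagonal.mem_antidiagonal.mpr (zero_add β)) h

/-- Exponent vector `Σ_{i ∈ s} e_{Y_i}`. -/
def msum (s : Multiset (Fin m)) : Fin m ⊕ Fin n →₀ ℕ :=
  (s.map fun i => Finsupp.single (Sum.inl i) (1 : ℕ)).sum

@[simp] lemma msum_zero : msum (0 : Multiset (Fin m)) = (0 : Fin m ⊕ Fin n →₀ ℕ) := by
  simp [msum]

@[simp] lemma msum_cons (a : Fin m) (s : Multiset (Fin m)) :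
    msum (n := n) (a ::ₘ s) = Finsupp.single (Sum.inl a) 1 + msum s := by
  simp [msum]

lemma wt_msum (s : Multiset (Fin m)) : wt (msum (n := n) s) = Multiset.card s := by
  induction s using Multiset.induction with
  | empty => simp
  | cons a s ih => simp [wt_add, ih]; omega

lemma msum_apply_inr (s : Multiset (Fin m)) (j : Fin n) : msum s (Sum.inr j) = 0 := by
  induction s using Multiset.induction with
  | empty => simp
  | cons a s ih => simp [Finsupp.single_apply, ih]

lemma msum_apply_inl (s : Multiset (Fin m)) (i : Fin m) :
    msum (n := n) s (Sum.inl i) = s.count i := by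
  classical
  induction s using Multiset.induction with
  | empty => simp
  | cons a s ih =>
    rw [msum_cons, Finsupp.add_apply, ih, Multiset.count_cons]
    by_cases h : i = a <;> simp [Finsupp.single_apply, h] <;> omega

lemma msum_injective {s s' : Multiset (Fin m)} (h : msum (n := n) s = msum s') : s = s' := by
  classical
  ext i
  have := DFunLike.congr_fun h (Sum.inl i)
  rwa [msum_apply_inl, msum_apply_inl] at this

lemma φ_Qprod (c : Fin n) (s : Multiset (Fin m)) :
    φ k m n (Qprod k c s) =
      monomial (msum s + Finsupp.single (Sum.inr c) (Multiset.card s)) (1 : k) := by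
  induction s using Multiset.induction with
  | empty => simp [monomial_eq]
  | cons a s ih =>
    rw [Qprod_cons, map_mul, ih, φ_xbar]
    simp only [X, monomial_mul, one_mul, mul_one]
    congr 1
    rw [msum_cons, Multiset.card_cons, Finsupp.single_add]
    abel

/-- The exponent vector of the canonical generator `gen q c u`. -/
def eExp (c : Fin n) (ℓ : ℕ) (w : Sym (Fin m) (ℓ + 1) × Fin n) : Fin m ⊕ Fin n →₀ ℕ :=
  msum ↑w.1 + Finsupp.single (Sum.inr c) ℓ + Finsupp.single (Sum.inr w.2) 1

lemma wt_eExp (c : Fin n) (ℓ : ℕ) (w : Sym (Fin m) (ℓ + 1) × Fin n) :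
    wt (eExp c ℓ w) = 2 * ℓ + 2 := by
  rw [eExp, wt_add, wt_add, wt_msum, wt_single, wt_single]
  have : Multiset.card (↑w.1 : Multiset (Fin m)) = ℓ + 1 := w.1.2
  omega

lemma φ_gen (c : Fin n) (ℓ : ℕ) (w : Sym (Fin m) (ℓ + 1) × Fin n) :
    φ k m n (gen k w.2 c ↑w.1) = monomial (eExp c ℓ w) (1 : k) := by
  classical
  have hcardu : Multiset.card (↑w.1 : Multiset (Fin m)) = ℓ + 1 := w.1.2
  have h0 : (↑w.1 : Multiset (Fin m)) ≠ 0 := by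
    intro h
    rw [h] at hcardu
    simp at hcardu
  obtain ⟨a, ha⟩ := Multiset.exists_mem_of_ne_zero h0
  obtain ⟨s, hs⟩ := Multiset.exists_cons_of_mem ha
  rw [gen_eq k w.2 c _ a s hs, map_mul, φ_xbar, φ_Qprod]
  have hcard : Multiset.card s = ℓ := by
    rw [hs] at hcardu
    simp at hcardu
    omega
  simp only [X, monomial_mul, one_mul, mul_one]
  congr 1
  rw [eExp, hs, msum_cons, hcard]
  abel

lemma eExp_injective (c : Fin n) (ℓ : ℕ) : Function.Injective (eExp (m := m) c ℓ) := by
  classical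
  rintro ⟨u, j⟩ ⟨u', j'⟩ h
  have hu : (↑u : Multiset (Fin m)) = ↑u' := by
    apply msum_injective (n := n)
    ext a
    rcases a with i | j''
    · have := DFunLike.congr_fun h (Sum.inl i)
      simpa [eExp, Finsupp.single_apply] using this
    · rw [msum_apply_inr, msum_apply_inr]
  have hj : j = j' := by
    by_contra hne
    have e1 := DFunLike.congr_fun h (Sum.inr j)
    simp only [eExp, Finsupp.add_apply, msum_apply_inr, Finsupp.single_apply,
      Sum.inr.injEq, zero_add] at e1
    split_ifs at e1 <;> first | exact hne (Eq.symm (by assumption)) | omega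
  simp [Prod.ext_iff, hj, Sym.coe_injective hu]

end Stmt4Aux

namespace Stmt4Aux

variable (k : Type*) [Field k] {m n : ℕ}

/-- Coefficient functionals indexed by the target monomials. -/
def Λ (c : Fin n) (ℓ : ℕ) :
    DetRing k m n →ₗ[k] (Sym (Fin m) (ℓ + 1) × Fin n → k) where
  toFun x := fun w => coeff (eExp c ℓ w) (φ k m n x)
  map_add' x y := by funext w; simp [map_add, coeff_add]
  map_smul' r x := by funext w; simp [map_smul, coeff_smul]

lemma Λ_apply (c : Fin n) (ℓ : ℕ) (x : DetRing k m n) (w) :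
    Λ k c ℓ x w = coeff (eExp c ℓ w) (φ k m n x) := rfl

lemma φ_mem_lowVanish (c : Fin n) (ℓ : ℕ) (P : Fin n → Prop) {x : DetRing k m n}
    (hx : x ∈ Ideal.span (genSet k c ℓ P)) :
    φ k m n x ∈ lowVanish k (2 * ℓ + 2) := by
  have hmap : Ideal.map (φ k m n) (Ideal.span (genSet k c ℓ P)) ≤ lowVanish k (2 * ℓ + 2) := by
    rw [Ideal.map_span, Ideal.span_le]
    rintro y ⟨g, ⟨j, u, hP, hu, rfl⟩, rfl⟩
    have hφ : φ k m n (gen k j c u) = monomial (eExp c ℓ (⟨u, hu⟩, j)) (1 : k) :=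
      φ_gen k c ℓ (⟨u, hu⟩, j)
    intro β hβ
    rw [hφ, coeff_monomial]
    split_ifs with he
    · exfalso
      rw [← he, wt_eExp] at hβ
      omega
    · rfl
  exact hmap (Ideal.mem_map_of_mem _ hx)

lemma Λ_mul (c : Fin n) (ℓ : ℕ) {x : DetRing k m n}
    (hx : φ k m n x ∈ lowVanish k (2 * ℓ + 2)) (r : DetRing k m n) :
    Λ k c ℓ (r * x) = constantCoeff (φ k m n r) • Λ k c ℓ x := by
  funext w
  rw [Pi.smul_apply, Λ_apply, Λ_apply, map_mul,
    coeff_mul_lowVanish k _ _ hx (wt_eExp c ℓ w), smul_eq_mul]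

lemma Λ_gen (c : Fin n) (ℓ : ℕ) (w : Sym (Fin m) (ℓ + 1) × Fin n) :
    Λ k c ℓ (gen k w.2 c ↑w.1) = Pi.single w 1 := by
  classical
  funext w'
  rw [Λ_apply, φ_gen k c ℓ w, coeff_monomial, Pi.single_apply]
  by_cases h : w' = w
  · simp [h]
  · rw [if_neg h, if_neg (fun he => h (eExp_injective c ℓ he).symm)]

lemma card_le_of_span (c : Fin n) (ℓ : ℕ) (s : Finset (DetRing k m n))
    (hs : Ideal.span (s : Set (DetRing k m n)) =
      Ideal.span (genSet k c ℓ fun _ => True)) :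
    Fintype.card (Sym (Fin m) (ℓ + 1) × Fin n) ≤ s.card := by
  classical
  set I := Ideal.span (genSet k c ℓ fun _ => True) with hI
  set W := Submodule.span k (Λ k c ℓ '' (s : Set (DetRing k m n))) with hW
  have hmem : ∀ x ∈ I, Λ k c ℓ x ∈ W := by
    intro x hx
    rw [← hs] at hx
    refine Submodule.span_induction ?_ ?_ ?_ ?_ hx
    · intro y hy
      exact Submodule.subset_span ⟨y, hy, rfl⟩
    · rw [map_zero]; exact zero_mem W
    · intro a b _ _ ha hb
      rw [map_add]; exact add_mem ha hb
    · intro r y hy hyW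
      have hyI : y ∈ I := by rw [← hs]; exact hy
      have hv := φ_mem_lowVanish k c ℓ (fun _ => True) hyI
      rw [smul_eq_mul, Λ_mul k c ℓ hv r]
      exact Submodule.smul_mem _ _ hyW
  have hsingle : ∀ w : Sym (Fin m) (ℓ + 1) × Fin n, Pi.single w (1 : k) ∈ W := by
    intro w
    have hg : gen k w.2 c ↑w.1 ∈ I :=
      Ideal.subset_span ⟨w.2, ↑w.1, trivial, w.1.2, rfl⟩
    have := hmem _ hg
    rwa [Λ_gen] at this
  have hW_top : W = ⊤ := by
    rw [eq_top_iff, ← (Pi.basisFun k (Sym (Fin m) (ℓ + 1) × Fin n)).span_eq]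
    refine Submodule.span_le.mpr ?_
    rintro _ ⟨w, rfl⟩
    rw [Pi.basisFun_apply]
    exact hsingle w
  have h1 : Fintype.card (Sym (Fin m) (ℓ + 1) × Fin n) =
      Module.finrank k (Sym (Fin m) (ℓ + 1) × Fin n → k) := (Module.finrank_pi k).symm
  have h2 : Module.finrank k (Sym (Fin m) (ℓ + 1) × Fin n → k) = Module.finrank k W := by
    rw [hW_top]
    exact (finrank_top k _).symm
  have h3 : Module.finrank k W ≤ (s.image (Λ k c ℓ)).card := by
    have he : W = Submodule.span k ((s.image (Λ k c ℓ) : Finset _) : Set _) := by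
      rw [Finset.coe_image]
    rw [he]
    exact finrank_span_finset_le_card _
  have h4 : (s.image (Λ k c ℓ)).card ≤ s.card := Finset.card_image_le
  omega

end Stmt4Aux

lemma idealMu_le {A : Type*} [CommRing A] (I : Ideal A) (s : Finset A)
    (h : Ideal.span (s : Set A) = I) : idealMu I ≤ s.card :=
  Nat.sInf_le ⟨s, rfl, h⟩

lemma idealMu_exists_min {A : Type*} [CommRing A] [IsNoetherianRing A] (I : Ideal A) :
    ∃ s : Finset A, s.card = idealMu I ∧ Ideal.span (s : Set A) = I := by
  obtain ⟨t, ht⟩ := IsNoetherian.noetherian I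
  have hne : {c : ℕ | ∃ s : Finset A, s.card = c ∧ Ideal.span (s : Set A) = I}.Nonempty :=
    ⟨t.card, t, rfl, ht⟩
  exact Nat.sInf_mem hne

lemma idealMu_sup_le {A : Type*} [CommRing A] [IsNoetherianRing A] (I J : Ideal A) :
    idealMu (I ⊔ J) ≤ idealMu I + idealMu J := by
  classical
  obtain ⟨s, hs, hsp⟩ := idealMu_exists_min I
  obtain ⟨t, ht, htp⟩ := idealMu_exists_min J
  have hspan : Ideal.span ((s ∪ t : Finset A) : Set A) = I ⊔ J := by
    rw [Finset.coe_union, Ideal.span_union, hsp, htp]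
  calc idealMu (I ⊔ J) ≤ (s ∪ t).card := idealMu_le _ _ hspan
    _ ≤ s.card + t.card := Finset.card_union_le s t
    _ = idealMu I + idealMu J := by rw [hs, ht]

instance detRingNoetherian : IsNoetherianRing (DetRing k m n) := by
  infer_instance

/-- **Claim in Lemma 3.3.** If `n ≥ 3` and `ℓ ≥ 1`, then
`μ_R(M·Q^ℓ) = μ_R(M′·Q^ℓ) + μ_R(𝔮·Q^ℓ)`. -/
theorem stmt_4 [Infinite k] (hm : 2 ≤ m) (hmn : m ≤ n) (hn : 3 ≤ n)
    (ℓ : ℕ) (hℓ : 1 ≤ ℓ) :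
    idealMu (maxIdeal k m n * colIdeal k m n ^ ℓ) =
      idealMu (maxIdeal' k m n * colIdeal k m n ^ ℓ) +
        idealMu (lastColIdeal k m n * colIdeal k m n ^ ℓ) := by
  classical
  open Stmt4Aux in
  set c : Fin n := ⟨0, by omega⟩ with hcdef
  have hc : (c : ℕ) = 0 := rfl
  -- identification of the three ideals by canonical generators
  have hA : maxIdeal' k m n * colIdeal k m n ^ ℓ =
      Ideal.span (genSet k c ℓ fun j => (j : ℕ) < n - 1) := by
    rw [maxIdeal']; exact Stmt4Aux.prod_span k c hc ℓ _
  have hB : lastColIdeal k m n * colIdeal k m n ^ ℓ =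
      Ideal.span (genSet k c ℓ fun j => (j : ℕ) = n - 1) := by
    rw [lastColIdeal]; exact Stmt4Aux.prod_span k c hc ℓ _
  have hM : maxIdeal k m n * colIdeal k m n ^ ℓ =
      Ideal.span (genSet k c ℓ fun _ => True) := by
    rw [Stmt4Aux.maxIdeal_eq]; exact Stmt4Aux.prod_span k c hc ℓ _
  -- the big ideal is the join of the two others
  have hsplit : maxIdeal k m n * colIdeal k m n ^ ℓ =
      maxIdeal' k m n * colIdeal k m n ^ ℓ ⊔ lastColIdeal k m n * colIdeal k m n ^ ℓ := by
    rw [hA, hB, hM, ← Ideal.span_union]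
    congr 1
    ext y
    constructor
    · rintro ⟨j, u, -, hu, rfl⟩
      have hj : (j : ℕ) < n - 1 ∨ (j : ℕ) = n - 1 := by
        have := j.isLt; omega
      rcases hj with hj | hj
      · exact Or.inl ⟨j, u, hj, hu, rfl⟩
      · exact Or.inr ⟨j, u, hj, hu, rfl⟩
    · rintro (⟨j, u, -, hu, rfl⟩ | ⟨j, u, -, hu, rfl⟩) <;>
        exact ⟨j, u, trivial, hu, rfl⟩
  -- explicit finite generating sets for A and B
  set G : Sym (Fin m) (ℓ + 1) × Fin n → DetRing k m n :=
    fun w => Stmt4Aux.gen k w.2 c ↑w.1 with hG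
  set tA : Finset (Sym (Fin m) (ℓ + 1) × Fin n) :=
    Finset.univ.filter (fun w => (w.2 : ℕ) < n - 1) with htA
  set tB : Finset (Sym (Fin m) (ℓ + 1) × Fin n) :=
    Finset.univ.filter (fun w => ¬ ((w.2 : ℕ) < n - 1)) with htB
  have hsA : Ideal.span ((tA.image G : Finset (DetRing k m n)) : Set (DetRing k m n)) =
      maxIdeal' k m n * colIdeal k m n ^ ℓ := by
    rw [hA, Finset.coe_image]
    congr 1
    ext y
    constructor
    · rintro ⟨w, hw, rfl⟩
      rw [Finset.mem_coe, htA, Finset.mem_filter] at hw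
      exact ⟨w.2, ↑w.1, hw.2, w.1.2, rfl⟩
    · rintro ⟨j, u, hP, hu, rfl⟩
      exact ⟨(⟨u, hu⟩, j), by simp [htA, hP], rfl⟩
  have hsB : Ideal.span ((tB.image G : Finset (DetRing k m n)) : Set (DetRing k m n)) =
      lastColIdeal k m n * colIdeal k m n ^ ℓ := by
    rw [hB, Finset.coe_image]
    congr 1
    ext y
    constructor
    · rintro ⟨w, hw, rfl⟩
      rw [Finset.mem_coe, htB, Finset.mem_filter] at hw
      refine ⟨w.2, ↑w.1, ?_, w.1.2, rfl⟩
      have := w.2.isLt; omega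
    · rintro ⟨j, u, hP, hu, rfl⟩
      exact ⟨(⟨u, hu⟩, j), by simp [htB, hP]; omega, rfl⟩
  have h2 : idealMu (maxIdeal' k m n * colIdeal k m n ^ ℓ) ≤ tA.card :=
    le_trans (idealMu_le _ _ hsA) Finset.card_image_le
  have h3 : idealMu (lastColIdeal k m n * colIdeal k m n ^ ℓ) ≤ tB.card :=
    le_trans (idealMu_le _ _ hsB) Finset.card_image_le
  -- the lower bound for the big ideal
  have h4 : Fintype.card (Sym (Fin m) (ℓ + 1) × Fin n) ≤
      idealMu (maxIdeal k m n * colIdeal k m n ^ ℓ) := by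
    obtain ⟨s, hscard, hsp⟩ := idealMu_exists_min (maxIdeal k m n * colIdeal k m n ^ ℓ)
    rw [← hscard]
    exact Stmt4Aux.card_le_of_span k c ℓ s (by rw [hsp, hM])
  have h5 : tA.card + tB.card = Fintype.card (Sym (Fin m) (ℓ + 1) × Fin n) := by
    rw [htA, htB, Finset.card_filter_add_card_filter_not, Finset.card_univ]
  have h1 : idealMu (maxIdeal k m n * colIdeal k m n ^ ℓ) ≤
      idealMu (maxIdeal' k m n * colIdeal k m n ^ ℓ) +
        idealMu (lastColIdeal k m n * colIdeal k m n ^ ℓ) := by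
    rw [hsplit]
    exact idealMu_sup_le _ _
  omega
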